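/- arXiv:2209.06811 — 4 statements merged into one kernel-verified Lean document; each statement's English description precedes it below -/
import Mathlib

section
/- Let Δ > 0, ε > 0, and η ∈ (0, 1] with ε·η ≤ Δ, and set σ := min(0.9·Δ/√(2·ln(9Δ/(ε·η))), 0.2·Δ). Then |g_σ(0.9·Δ)| ≤ 0.1·ε·η/(√(2π)·σ³); equivalently, 0.9·Δ·exp(−(0.9·Δ)²/(2σ²)) ≤ 0.1·ε·η. -/
open Real

/-- The Gaussian derivative filter `g_σ(x) = −(1/(√(2π)·σ³))·x·exp(−x²/(2σ²))`. -/
noncomputable def gaussDerivFilter (σ x : ℝ) : ℝ :=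
  -(1 / (Real.sqrt (2 * π) * σ ^ 3)) * x * Real.exp (-(x ^ 2) / (2 * σ ^ 2))

/-- With `σ := min(0.9·Δ/√(2·ln(9Δ/(ε·η))), 0.2·Δ)`, the Gaussian derivative filter
satisfies `|g_σ(0.9·Δ)| ≤ 0.1·ε·η/(√(2π)·σ³)`, equivalently
`0.9·Δ·exp(−(0.9·Δ)²/(2σ²)) ≤ 0.1·ε·η`. -/
theorem abs_gaussDerivFilter_at_gap (Δ ε η : ℝ) (hΔ : 0 < Δ) (hε : 0 < ε)
    (hη0 : 0 < η) (hη1 : η ≤ 1) (hεη : ε * η ≤ Δ)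
    (σ : ℝ)
    (hσ : σ = min (0.9 * Δ / Real.sqrt (2 * Real.log (9 * Δ / (ε * η)))) (0.2 * Δ)) :
    |gaussDerivFilter σ (0.9 * Δ)| ≤ 0.1 * ε * η / (Real.sqrt (2 * π) * σ ^ 3) ∧
    0.9 * Δ * Real.exp (-(0.9 * Δ) ^ 2 / (2 * σ ^ 2)) ≤ 0.1 * ε * η := by
  have hεη0 : 0 < ε * η := mul_pos hε hη0
  set L := Real.log (9 * Δ / (ε * η)) with hLdef
  have hr : (9 : ℝ) ≤ 9 * Δ / (ε * η) := by
    rw [le_div_iff₀ hεη0]; nlinarith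
  have hr0 : 0 < 9 * Δ / (ε * η) := by linarith
  have hL0 : 0 < L := Real.log_pos (by linarith)
  have hs2L : 0 < Real.sqrt (2 * L) := Real.sqrt_pos.mpr (by linarith)
  have hσ0 : 0 < σ := by
    rw [hσ]
    exact lt_min (div_pos (by linarith) hs2L) (by linarith)
  have hσle : σ ≤ 0.9 * Δ / Real.sqrt (2 * L) := hσ ▸ min_le_left _ _
  have hmul : σ * Real.sqrt (2 * L) ≤ 0.9 * Δ := (le_div_iff₀ hs2L).mp hσle
  have hsq : Real.sqrt (2 * L) ^ 2 = 2 * L := Real.sq_sqrt (by linarith)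
  have h2σ2 : 0 < 2 * σ ^ 2 := by positivity
  have hLle : L ≤ (0.9 * Δ) ^ 2 / (2 * σ ^ 2) := by
    rw [le_div_iff₀ h2σ2]
    have hmm : (σ * Real.sqrt (2 * L)) * (σ * Real.sqrt (2 * L)) ≤ (0.9 * Δ) * (0.9 * Δ) :=
      mul_le_mul hmul hmul (by positivity) (by linarith)
    nlinarith [hmm, hsq]
  have hexpL : Real.exp (-L) = ε * η / (9 * Δ) := by
    rw [Real.exp_neg, Real.exp_log hr0, inv_div]
  have hexp : Real.exp (-(0.9 * Δ) ^ 2 / (2 * σ ^ 2)) ≤ ε * η / (9 * Δ) := by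
    rw [← hexpL]
    apply Real.exp_le_exp.mpr
    rw [neg_div]
    linarith
  have key : 0.9 * Δ * Real.exp (-(0.9 * Δ) ^ 2 / (2 * σ ^ 2)) ≤ 0.1 * ε * η := by
    have h1 : 0.9 * Δ * Real.exp (-(0.9 * Δ) ^ 2 / (2 * σ ^ 2)) ≤ 0.9 * Δ * (ε * η / (9 * Δ)) :=
      mul_le_mul_of_nonneg_left hexp (by linarith)
    have h2 : 0.9 * Δ * (ε * η / (9 * Δ)) = 0.1 * ε * η := by
      field_simp
      ring
    linarith
  have hD : 0 < Real.sqrt (2 * π) * σ ^ 3 := by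
    have := Real.pi_pos
    positivity
  constructor
  · have habs : |gaussDerivFilter σ (0.9 * Δ)| =
        0.9 * Δ * Real.exp (-(0.9 * Δ) ^ 2 / (2 * σ ^ 2)) / (Real.sqrt (2 * π) * σ ^ 3) := by
      unfold gaussDerivFilter
      rw [abs_of_nonpos]
      · field_simp
      · have hE : 0 < Real.exp (-(0.9 * Δ) ^ 2 / (2 * σ ^ 2)) := Real.exp_pos _
        have : 0 ≤ 1 / (Real.sqrt (2 * π) * σ ^ 3) * (0.9 * Δ) *
            Real.exp (-(0.9 * Δ) ^ 2 / (2 * σ ^ 2)) := by positivity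
        nlinarith
    rw [habs]
    exact div_le_div_of_nonneg_right key hD.le
  · exact key
end

section
/- Let c = √(2·ln(10/9)). Let Δ > 0, η ∈ (0, 1], N ≥ 1, weights p_0, …, p_{N−1} ≥ 0 with Σ_j p_j = 1 and p_0 ≥ η, and energies E_0 < E_1 ≤ … ≤ E_{N−1} with E_j − E_0 ≥ Δ for all 1 ≤ j ≤ N−1. Suppose ε > 0 satisfies ε ≤ c·min(0.9·Δ/√(2·ln(9Δ/(ε·η))), 0.2·Δ), and set σ := min(0.9·Δ/√(2·ln(9Δ/(ε·η))), 0.2·Δ). Then: (i) |(g_σ∗p)(x)| < 0.6·ε·p_0/(√(2π)·σ³) for every x ∈ [E_0 − 0.5ε, E_0 + 0.5ε]; and (ii) |(g_σ∗p)(x)| > 0.8·ε·p_0/(√(2π)·σ³) for every x ∈ [E_0 − 0.5σ, E_0 − ε) ∪ (E_0 + ε, E_0 + 0.5σ]. -/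
open Real

lemma gauss_aux_dec (σ a t : ℝ) (hσ : 0 < σ) (ha : σ ≤ a) (hat : a ≤ t) :
    t * Real.exp (-(t^2) / (2*σ^2)) ≤ a * Real.exp (-(a^2) / (2*σ^2)) := by
  have h2σ : (0:ℝ) < 2*σ^2 := by positivity
  set y : ℝ := (t^2 - a^2)/(2*σ^2) with hy
  have hy2 : y * (2*σ^2) = t^2 - a^2 := div_mul_cancel₀ _ (ne_of_gt h2σ)
  have h1 : y + 1 ≤ Real.exp y := Real.add_one_le_exp y
  have ha0 : 0 < a := lt_of_lt_of_le hσ ha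
  have ht : t ≤ a * Real.exp y := by
    have h2 : a * (y + 1) ≤ a * Real.exp y := mul_le_mul_of_nonneg_left h1 ha0.le
    have h5 : a * y * (2*σ^2) = a*(t^2-a^2) := by rw [mul_assoc, hy2]
    have k1 : 2*σ^2 ≤ a*(t+a) := by nlinarith
    have k2 : (0:ℝ) ≤ (t-a) * (a*(t+a) - 2*σ^2) := mul_nonneg (by linarith) (by linarith)
    nlinarith [h2, h5, k2, h2σ]
  calc t * Real.exp (-(t^2)/(2*σ^2)) ≤ (a * Real.exp y) * Real.exp (-(t^2)/(2*σ^2)) :=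
        mul_le_mul_of_nonneg_right ht (Real.exp_pos _).le
    _ = a * Real.exp (-(a^2)/(2*σ^2)) := by
        rw [mul_assoc, ← Real.exp_add, hy, ← add_div]
        congr 2
        ring

lemma gauss_aux_inc (σ a t : ℝ) (hσ : 0 < σ) (ha : 0 < a) (hat : a < t) (ht : t ≤ σ/2) :
    a * Real.exp (-(a^2)/(2*σ^2)) < t * Real.exp (-(t^2)/(2*σ^2)) := by
  have h2σ : (0:ℝ) < 2*σ^2 := by positivity
  set y : ℝ := (t^2 - a^2)/(2*σ^2) with hy
  have hy2 : y * (2*σ^2) = t^2 - a^2 := div_mul_cancel₀ _ (ne_of_gt h2σ)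
  have hypos : 0 < y := by
    apply div_pos _ h2σ; nlinarith
  have h1 : (-y) + 1 < Real.exp (-y) := Real.add_one_lt_exp (by linarith : -y ≠ 0)
  have ht2 : a < t * Real.exp (-y) := by
    have h2 : t * ((-y) + 1) < t * Real.exp (-y) :=
      mul_lt_mul_of_pos_left h1 (lt_trans ha hat)
    have h5 : t * y * (2*σ^2) = t*(t^2-a^2) := by rw [mul_assoc, hy2]
    have k1 : t*(t+a) ≤ 2*σ^2 := by nlinarith
    have k2 : (0:ℝ) ≤ (t-a) * (2*σ^2 - t*(t+a)) := mul_nonneg (by linarith) (by linarith)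
    nlinarith [h2, h5, k2, h2σ]
  calc a * Real.exp (-(a^2)/(2*σ^2))
      < (t * Real.exp (-y)) * Real.exp (-(a^2)/(2*σ^2)) :=
        mul_lt_mul_of_pos_right ht2 (Real.exp_pos _)
    _ = t * Real.exp (-(t^2)/(2*σ^2)) := by
        rw [mul_assoc, ← Real.exp_add, hy]
        congr 2
        have hs : σ ≠ 0 := ne_of_gt hσ
        field_simp
        ring


set_option maxHeartbeats 1000000

/-- Separation properties of the convolution `(g_σ∗p)(x) = Σ_j p_j·g_σ(x − E_j)` of the
Gaussian derivative filter with the spectral measure: the convolution is small near `E_0`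
and large away from `E_0` (within `[E_0 − 0.5σ, E_0 + 0.5σ]`). -/
theorem gaussDerivConv_separation (Δ η : ℝ) (hΔ : 0 < Δ) (hη0 : 0 < η) (hη1 : η ≤ 1)
    (N : ℕ) (hN : 1 ≤ N) (p E : Fin N → ℝ)
    (hp_nonneg : ∀ j, 0 ≤ p j) (hp_sum : ∑ j, p j = 1) (hp0 : η ≤ p ⟨0, hN⟩)
    (hE_lt : ∀ j : Fin N, 1 ≤ j.val → E ⟨0, hN⟩ < E j)
    (hE_chain : ∀ i j : Fin N, 1 ≤ i.val → i ≤ j → E i ≤ E j)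
    (hE_gap : ∀ j : Fin N, 1 ≤ j.val → Δ ≤ E j - E ⟨0, hN⟩)
    (ε : ℝ) (hε : 0 < ε)
    (hε_small : ε ≤ Real.sqrt (2 * Real.log (10 / 9)) *
      min (0.9 * Δ / Real.sqrt (2 * Real.log (9 * Δ / (ε * η)))) (0.2 * Δ))
    (σ : ℝ)
    (hσ : σ = min (0.9 * Δ / Real.sqrt (2 * Real.log (9 * Δ / (ε * η)))) (0.2 * Δ)) :
    (∀ x : ℝ, E ⟨0, hN⟩ - 0.5 * ε ≤ x → x ≤ E ⟨0, hN⟩ + 0.5 * ε →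
      |∑ j, p j * gaussDerivFilter σ (x - E j)| <
        0.6 * ε * p ⟨0, hN⟩ / (Real.sqrt (2 * π) * σ ^ 3)) ∧
    (∀ x : ℝ, (E ⟨0, hN⟩ - 0.5 * σ ≤ x ∧ x < E ⟨0, hN⟩ - ε) ∨
        (E ⟨0, hN⟩ + ε < x ∧ x ≤ E ⟨0, hN⟩ + 0.5 * σ) →
      0.8 * ε * p ⟨0, hN⟩ / (Real.sqrt (2 * π) * σ ^ 3) <
        |∑ j, p j * gaussDerivFilter σ (x - E j)|) := by
  set z : Fin N := ⟨0, hN⟩ with hzdef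
  have hπ : (0:ℝ) < Real.sqrt (2 * π) := Real.sqrt_pos.2 (by positivity)
  -- basic facts about c = √(2 ln(10/9))
  set c : ℝ := Real.sqrt (2 * Real.log (10 / 9)) with hcdef
  have hlog109 : 0 < Real.log (10/9) := Real.log_pos (by norm_num)
  have hc2 : c ^ 2 = 2 * Real.log (10/9) := Real.sq_sqrt (by positivity)
  have hc_nonneg : 0 ≤ c := Real.sqrt_nonneg _
  have hc_le : c ≤ 1 := by
    nlinarith [Real.log_le_sub_one_of_pos (show (0:ℝ) < 10/9 by norm_num)]
  have hσ2 : σ ≤ 0.2 * Δ := by rw [hσ]; exact min_le_right _ _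
  have hmin_nonneg : (0:ℝ) ≤ min (0.9 * Δ / Real.sqrt (2 * Real.log (9 * Δ / (ε * η)))) (0.2 * Δ) :=
    le_min (div_nonneg (by linarith) (Real.sqrt_nonneg _)) (by linarith)
  have hεΔ : ε ≤ 0.2 * Δ := by
    calc ε ≤ c * min (0.9 * Δ / Real.sqrt (2 * Real.log (9 * Δ / (ε * η)))) (0.2 * Δ) := hε_small
      _ ≤ 1 * min (0.9 * Δ / Real.sqrt (2 * Real.log (9 * Δ / (ε * η)))) (0.2 * Δ) :=
          mul_le_mul_of_nonneg_right hc_le hmin_nonneg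
      _ = min (0.9 * Δ / Real.sqrt (2 * Real.log (9 * Δ / (ε * η)))) (0.2 * Δ) := one_mul _
      _ ≤ 0.2 * Δ := min_le_right _ _
  have hεη_pos : 0 < ε * η := mul_pos hε hη0
  have hL : 0 < Real.log (9 * Δ / (ε * η)) := by
    apply Real.log_pos
    rw [lt_div_iff₀ hεη_pos]
    nlinarith
  have hsqL : 0 < Real.sqrt (2 * Real.log (9 * Δ / (ε * η))) := Real.sqrt_pos.2 (by linarith)
  have hσpos : 0 < σ := by
    rw [hσ]
    exact lt_min (div_pos (by linarith) hsqL) (by linarith)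
  have hεcσ : ε ≤ c * σ := by rw [hσ]; exact hε_small
  have hεσ : ε ≤ σ := le_trans hεcσ (by nlinarith)
  have hC : (0:ℝ) < 1 / (Real.sqrt (2 * π) * σ ^ 3) := by positivity
  -- exp(-ε²/(2σ²)) ≥ 9/10
  have hexp9 : (9:ℝ)/10 ≤ Real.exp (-(ε^2) / (2*σ^2)) := by
    have h1 : ε^2 ≤ 2 * Real.log (10/9) * σ^2 := by nlinarith
    have h2 : -Real.log (10/9) ≤ -(ε^2) / (2*σ^2) := by
      rw [neg_le, ← neg_div, neg_neg, div_le_iff₀ (by positivity : (0:ℝ) < 2*σ^2)]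
      nlinarith
    calc (9:ℝ)/10 = Real.exp (-Real.log (10/9)) := by
          rw [Real.exp_neg, Real.exp_log (by norm_num : (0:ℝ) < 10/9)]; norm_num
      _ ≤ Real.exp (-(ε^2) / (2*σ^2)) := Real.exp_le_exp.2 h2
  -- tail exponential bound
  have hexp_tail : Real.exp (-((0.9*Δ)^2) / (2*σ^2)) ≤ ε * η / (9 * Δ) := by
    have hσle : σ ≤ 0.9 * Δ / Real.sqrt (2 * Real.log (9 * Δ / (ε * η))) := by
      rw [hσ]; exact min_le_left _ _
    have h1 : σ * Real.sqrt (2 * Real.log (9 * Δ / (ε * η))) ≤ 0.9 * Δ := by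
      rw [← le_div_iff₀ hsqL]; exact hσle
    have hsq : (Real.sqrt (2 * Real.log (9 * Δ / (ε * η))))^2 = 2 * Real.log (9 * Δ / (ε * η)) :=
      Real.sq_sqrt (by linarith)
    have h2 : 2 * Real.log (9 * Δ / (ε * η)) * σ^2 ≤ (0.9*Δ)^2 := by
      have hq := pow_le_pow_left₀ (mul_nonneg hσpos.le hsqL.le) h1 2
      rw [mul_pow, hsq] at hq
      linarith
    have h3 : -((0.9*Δ)^2) / (2*σ^2) ≤ -Real.log (9 * Δ / (ε * η)) := by
      rw [neg_div, neg_le_neg_iff, le_div_iff₀ (by positivity : (0:ℝ) < 2*σ^2)]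
      ring_nf
      ring_nf at h2
      linarith
    calc Real.exp (-((0.9*Δ)^2) / (2*σ^2)) ≤ Real.exp (-Real.log (9 * Δ / (ε * η))) :=
          Real.exp_le_exp.2 h3
      _ = ε * η / (9 * Δ) := by
          rw [Real.exp_neg, Real.exp_log (by positivity), inv_div]
  -- notation for the normalized sum
  set T : ℝ → Fin N → ℝ := fun x j => (x - E j) * Real.exp (-((x - E j)^2) / (2*σ^2)) with hT
  have hrw : ∀ x : ℝ, ∑ j, p j * gaussDerivFilter σ (x - E j)
      = -(1 / (Real.sqrt (2 * π) * σ ^ 3)) * ∑ j, p j * T x j := by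
    intro x
    rw [Finset.mul_sum]
    exact Finset.sum_congr rfl fun j _ => by simp only [hT, gaussDerivFilter]; ring
  have habs_rw : ∀ x : ℝ, |∑ j, p j * gaussDerivFilter σ (x - E j)|
      = (1 / (Real.sqrt (2 * π) * σ ^ 3)) * |∑ j, p j * T x j| := by
    intro x
    rw [hrw x, abs_mul, abs_neg, abs_of_pos hC]
  have hz_mem : z ∈ (Finset.univ : Finset (Fin N)) := Finset.mem_univ z
  have hsplit : ∀ x : ℝ, ∑ j, p j * T x j
      = p z * T x z + ∑ j ∈ Finset.univ.erase z, p j * T x j :=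
    fun x => (Finset.add_sum_erase _ _ hz_mem).symm
  -- tail bound
  have tail_bound : ∀ x : ℝ, x ≤ E z + 0.1 * Δ →
      |∑ j ∈ Finset.univ.erase z, p j * T x j| ≤ 0.1 * (ε * η) := by
    intro x hx
    have hterm : ∀ j ∈ Finset.univ.erase z, |p j * T x j| ≤ p j * (0.1 * (ε * η)) := by
      intro j hj
      have hj1 : 1 ≤ j.val := by
        by_contra h
        have : j.val = 0 := by omega
        exact (Finset.ne_of_mem_erase hj) (Fin.ext this)
      have hEj := hE_gap j hj1
      have ht09 : 0.9 * Δ ≤ E j - x := by linarith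
      have htpos : 0 < E j - x := by linarith
      have habs : |T x j| = (E j - x) * Real.exp (-((E j - x)^2) / (2*σ^2)) := by
        have h1 : x - E j = -(E j - x) := by ring
        rw [hT]
        simp only [h1]
        rw [abs_mul, abs_neg, abs_of_pos htpos, abs_of_pos (Real.exp_pos _), neg_pow]
        norm_num
      have hdec := gauss_aux_dec σ (0.9*Δ) (E j - x) hσpos (by linarith) ht09
      have hbd : |T x j| ≤ 0.1 * (ε * η) := by
        rw [habs]
        calc (E j - x) * Real.exp (-((E j - x)^2) / (2*σ^2))
            ≤ (0.9*Δ) * Real.exp (-((0.9*Δ)^2) / (2*σ^2)) := hdec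
          _ ≤ (0.9*Δ) * (ε * η / (9 * Δ)) :=
              mul_le_mul_of_nonneg_left hexp_tail (by linarith)
          _ = 0.1 * (ε * η) := by field_simp; ring
      rw [abs_mul, abs_of_nonneg (hp_nonneg j)]
      exact mul_le_mul_of_nonneg_left hbd (hp_nonneg j)
    calc |∑ j ∈ Finset.univ.erase z, p j * T x j|
        ≤ ∑ j ∈ Finset.univ.erase z, |p j * T x j| := Finset.abs_sum_le_sum_abs _ _
      _ ≤ ∑ j ∈ Finset.univ.erase z, p j * (0.1 * (ε * η)) := Finset.sum_le_sum hterm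
      _ = (∑ j ∈ Finset.univ.erase z, p j) * (0.1 * (ε * η)) := by rw [Finset.sum_mul]
      _ ≤ 1 * (0.1 * (ε * η)) := by
          apply mul_le_mul_of_nonneg_right _ (by positivity)
          rw [← hp_sum]
          exact Finset.sum_le_sum_of_subset_of_nonneg (Finset.erase_subset _ _)
            (fun j _ _ => hp_nonneg j)
      _ = 0.1 * (ε * η) := one_mul _
  have hεηp0 : ε * η ≤ ε * p z := mul_le_mul_of_nonneg_left hp0 hε.le
  have hp0pos : 0 < p z := lt_of_lt_of_le hη0 hp0
  constructor
  · -- part (i)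
    intro x hx1 hx2
    have hxtail : x ≤ E z + 0.1 * Δ := by nlinarith
    have hmain : |p z * T x z| < p z * (0.5 * ε) := by
      rw [abs_mul, abs_of_nonneg (hp_nonneg z)]
      apply mul_lt_mul_of_pos_left _ hp0pos
      have habsu : |x - E z| ≤ 0.5 * ε := abs_le.2 ⟨by linarith, by linarith⟩
      rw [hT]
      simp only
      rw [abs_mul, abs_of_pos (Real.exp_pos _)]
      rcases eq_or_ne (x - E z) 0 with h0 | h0
      · rw [h0]; simp; positivity
      · have hlt1 : Real.exp (-((x - E z)^2) / (2*σ^2)) < 1 := by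
          apply Real.exp_lt_one_iff.2
          have : 0 < (x - E z)^2 := by positivity
          have h2σ : (0:ℝ) < 2*σ^2 := by positivity
          rw [neg_div]
          simp only [Left.neg_neg_iff]
          positivity
        have habspos : 0 < |x - E z| := abs_pos.2 h0
        calc |x - E z| * Real.exp (-((x - E z)^2) / (2*σ^2))
            < |x - E z| * 1 := mul_lt_mul_of_pos_left hlt1 habspos
          _ = |x - E z| := mul_one _
          _ ≤ 0.5 * ε := habsu
    have htail := tail_bound x hxtail
    have hTbd : |∑ j, p j * T x j| < 0.6 * ε * p z := by
      calc |∑ j, p j * T x j| = |p z * T x z + ∑ j ∈ Finset.univ.erase z, p j * T x j| := by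
            rw [hsplit x]
        _ ≤ |p z * T x z| + |∑ j ∈ Finset.univ.erase z, p j * T x j| := abs_add_le _ _
        _ < p z * (0.5 * ε) + 0.1 * (ε * η) := by linarith
        _ ≤ 0.6 * ε * p z := by nlinarith
    rw [habs_rw x]
    have hEq : 0.6 * ε * p z / (Real.sqrt (2 * π) * σ ^ 3)
        = (1 / (Real.sqrt (2 * π) * σ ^ 3)) * (0.6 * ε * p z) := by ring
    rw [hEq]
    exact mul_lt_mul_of_pos_left hTbd hC
  · -- part (ii)
    intro x hx
    have hu1 : ε < |x - E z| := by
      rcases hx with ⟨h1, h2⟩ | ⟨h1, h2⟩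
      · rw [abs_sub_comm, abs_of_pos (by linarith)]; linarith
      · rw [abs_of_pos (by linarith)]; linarith
    have hu2 : |x - E z| ≤ 0.5 * σ := by
      rcases hx with ⟨h1, h2⟩ | ⟨h1, h2⟩
      · rw [abs_sub_comm, abs_of_pos (by linarith)]; linarith
      · rw [abs_of_pos (by linarith)]; linarith
    have hxtail : x ≤ E z + 0.1 * Δ := by
      rcases hx with ⟨h1, h2⟩ | ⟨h1, h2⟩
      · nlinarith
      · nlinarith
    have hmain : p z * (0.9 * ε) < |p z * T x z| := by
      rw [abs_mul, abs_of_nonneg (hp_nonneg z)]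
      apply mul_lt_mul_of_pos_left _ hp0pos
      have habsT : |T x z| = |x - E z| * Real.exp (-(|x - E z|^2) / (2*σ^2)) := by
        rw [hT]
        simp only
        rw [abs_mul, abs_of_pos (Real.exp_pos _), sq_abs]
      rw [habsT]
      have hinc := gauss_aux_inc σ ε (|x - E z|) hσpos hε hu1 (by linarith)
      have h9 : 0.9 * ε ≤ ε * Real.exp (-(ε^2) / (2*σ^2)) := by nlinarith
      linarith
    have htail := tail_bound x hxtail
    have hTbd : 0.8 * ε * p z < |∑ j, p j * T x j| := by
      have hdecomp : p z * T x z = (∑ j, p j * T x j) - ∑ j ∈ Finset.univ.erase z, p j * T x j := by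
        rw [hsplit x]; ring
      have htri : |p z * T x z| ≤ |∑ j, p j * T x j| + |∑ j ∈ Finset.univ.erase z, p j * T x j| := by
        rw [hdecomp]
        exact abs_sub _ _
      nlinarith
    rw [habs_rw x]
    have hEq : 0.8 * ε * p z / (Real.sqrt (2 * π) * σ ^ 3)
        = (1 / (Real.sqrt (2 * π) * σ ^ 3)) * (0.8 * ε * p z) := by ring
    rw [hEq]
    exact mul_lt_mul_of_pos_left hTbd hC
end

section
/- Let c = √(2·ln(10/9)). Let Δ > 0, η ∈ (0, 1], N ≥ 1, weights p_0, …, p_{N−1} ≥ 0 with Σ_j p_j = 1 and p_0 ≥ η, and energies E_0 < E_1 ≤ … ≤ E_{N−1} with E_j − E_0 ≥ Δ for all 1 ≤ j ≤ N−1. Suppose ε > 0 satisfies ε ≤ c·min(0.9·Δ/√(2·ln(9Δ/(ε·η))), 0.2·Δ), and set σ := min(0.9·Δ/√(2·ln(9Δ/(ε·η))), 0.2·Δ). Let Ẽ_0 ∈ ℝ satisfy |Ẽ_0 − E_0| ≤ σ/4, let M := ⌈σ/ε⌉ + 1, and for j ∈ {1, …, M} set x_j := Ẽ_0 − 0.25σ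 + (0.5σ/M)·(j − 1). Suppose h_1, …, h_M ∈ ℂ satisfy |(g_σ∗p)(x_j) − h_j| ≤ 0.1·ε·η/(√(2π)·σ³) for all j ∈ {1, …, M}. Then every index j* ∈ {1, …, M} with |h_{j*}| ≤ |h_j| for all j ∈ {1, …, M} satisfies |x_{j*} − E_0| ≤ ε. -/
open Real

lemma phi_incr {σ a b : ℝ} (hσ : 0 < σ) (ha : 0 ≤ a) (hab : a ≤ b) (hb : b ≤ σ) :
    a * Real.exp (-(a^2)/(2*σ^2)) ≤ b * Real.exp (-(b^2)/(2*σ^2)) := by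
  have hb0 : 0 ≤ b := ha.trans hab
  have hs : (0:ℝ) < 2*σ^2 := by positivity
  have key : a ≤ b * Real.exp ((a^2 - b^2)/(2*σ^2)) := by
    have h1 := Real.add_one_le_exp ((a^2 - b^2)/(2*σ^2))
    have h2 : b * ((a^2 - b^2)/(2*σ^2) + 1) ≤ b * Real.exp ((a^2 - b^2)/(2*σ^2)) := by
      nlinarith
    have h3 : a - b ≤ b * (a^2-b^2) / (2*σ^2) := by
      rw [le_div_iff₀ hs]
      nlinarith [mul_nonneg (sub_nonneg.2 hab) (show (0:ℝ) ≤ 2*σ^2 - b*(a+b) by nlinarith)]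
    have h4 : b * ((a^2 - b^2)/(2*σ^2) + 1) = b*(a^2-b^2)/(2*σ^2) + b := by ring
    linarith [h4 ▸ h2]
  calc a * Real.exp (-(a^2)/(2*σ^2))
      ≤ (b * Real.exp ((a^2 - b^2)/(2*σ^2))) * Real.exp (-(a^2)/(2*σ^2)) :=
        mul_le_mul_of_nonneg_right key (Real.exp_nonneg _)
    _ = b * Real.exp (-(b^2)/(2*σ^2)) := by
        rw [mul_assoc, ← Real.exp_add]; ring_nf

lemma phi_decr {σ a b : ℝ} (hσ : 0 < σ) (ha : σ ≤ a) (hab : a ≤ b) :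
    b * Real.exp (-(b^2)/(2*σ^2)) ≤ a * Real.exp (-(a^2)/(2*σ^2)) := by
  have ha0 : 0 < a := hσ.trans_le ha
  have hs : (0:ℝ) < 2*σ^2 := by positivity
  have key : b ≤ a * Real.exp ((b^2 - a^2)/(2*σ^2)) := by
    have h1 := Real.add_one_le_exp ((b^2 - a^2)/(2*σ^2))
    have h2 : a * ((b^2 - a^2)/(2*σ^2) + 1) ≤ a * Real.exp ((b^2 - a^2)/(2*σ^2)) := by
      nlinarith
    have h3 : b - a ≤ a * (b^2-a^2) / (2*σ^2) := by
      rw [le_div_iff₀ hs]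
      nlinarith [mul_nonneg (sub_nonneg.2 hab) (show (0:ℝ) ≤ a*(a+b) - 2*σ^2 by nlinarith)]
    have h4 : a * ((b^2 - a^2)/(2*σ^2) + 1) = a*(b^2-a^2)/(2*σ^2) + a := by ring
    linarith [h4 ▸ h2]
  calc b * Real.exp (-(b^2)/(2*σ^2))
      ≤ (a * Real.exp ((b^2 - a^2)/(2*σ^2))) * Real.exp (-(b^2)/(2*σ^2)) :=
        mul_le_mul_of_nonneg_right key (Real.exp_nonneg _)
    _ = a * Real.exp (-(a^2)/(2*σ^2)) := by
        rw [mul_assoc, ← Real.exp_add]; ring_nf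

lemma abs_gauss (σ t : ℝ) (hσ : 0 < σ) :
    |gaussDerivFilter σ t| = 1/(Real.sqrt (2*π)*σ^3) * (|t| * Real.exp (-(|t|^2)/(2*σ^2))) := by
  have h0 : (0:ℝ) < Real.sqrt (2*π) := Real.sqrt_pos.mpr (by positivity)
  unfold gaussDerivFilter
  rw [abs_mul, abs_mul, abs_neg, abs_of_pos (by positivity : (0:ℝ) < 1/(Real.sqrt (2*π)*σ^3)),
    Real.abs_exp, sq_abs, mul_assoc]

set_option maxHeartbeats 2000000 in
/-- Correctness of the grid-minimization step: given a coarse estimate `Etilde` of `E₀`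
(within `σ/4`) and estimates `h_j` of the convolution `(g_σ∗p)` on the grid
`x_j = Etilde − 0.25σ + (0.5σ/M)(j−1)` that are accurate within `0.1·ε·η/(√(2π)σ³)`,
any grid point minimizing `|h_j|` is `ε`-close to `E₀`.  (Here the index `j : Fin M`
represents `j − 1 ∈ {0, …, M−1}` for `j ∈ {1, …, M}`.) -/
theorem gaussDerivConv_grid_minimizer (Δ η : ℝ) (hΔ : 0 < Δ) (hη0 : 0 < η) (hη1 : η ≤ 1)
    (N : ℕ) (hN : 1 ≤ N) (p E : Fin N → ℝ)
    (hp_nonneg : ∀ j, 0 ≤ p j) (hp_sum : ∑ j, p j = 1) (hp0 : η ≤ p ⟨0, hN⟩)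
    (hE_lt : ∀ j : Fin N, 1 ≤ j.val → E ⟨0, hN⟩ < E j)
    (hE_chain : ∀ i j : Fin N, 1 ≤ i.val → i ≤ j → E i ≤ E j)
    (hE_gap : ∀ j : Fin N, 1 ≤ j.val → Δ ≤ E j - E ⟨0, hN⟩)
    (ε : ℝ) (hε : 0 < ε)
    (hε_small : ε ≤ Real.sqrt (2 * Real.log (10 / 9)) *
      min (0.9 * Δ / Real.sqrt (2 * Real.log (9 * Δ / (ε * η)))) (0.2 * Δ))
    (σ : ℝ)
    (hσ : σ = min (0.9 * Δ / Real.sqrt (2 * Real.log (9 * Δ / (ε * η)))) (0.2 * Δ))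
    (Etilde : ℝ) (hEtilde : |Etilde - E ⟨0, hN⟩| ≤ σ / 4)
    (M : ℕ) (hM : M = ⌈σ / ε⌉₊ + 1)
    (x : Fin M → ℝ) (hx : ∀ j : Fin M, x j = Etilde - 0.25 * σ + (0.5 * σ / M) * j.val)
    (h : Fin M → ℂ)
    (hh : ∀ j : Fin M,
      ‖(↑(∑ k, p k * gaussDerivFilter σ (x j - E k)) : ℂ) - h j‖ ≤
        0.1 * ε * η / (Real.sqrt (2 * π) * σ ^ 3)) :
    ∀ jstar : Fin M, (∀ j : Fin M, ‖h jstar‖ ≤ ‖h j‖) →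
      |x jstar - E ⟨0, hN⟩| ≤ ε := by
  intro jstar hjstar
  -- ## Preliminary numeric facts
  have hlog109 : Real.log (10/9) ≤ 1/9 := by
    have := Real.log_le_sub_one_of_pos (show (0:ℝ) < 10/9 by norm_num)
    linarith
  have hlog109' : (0:ℝ) < Real.log (10/9) := Real.log_pos (by norm_num)
  have hc : Real.sqrt (2*Real.log (10/9)) ≤ 0.48 := by
    rw [show (0.48:ℝ) = Real.sqrt (0.48^2) from (Real.sqrt_sq (by norm_num)).symm]
    exact Real.sqrt_le_sqrt (by nlinarith)
  have hc0 : (0:ℝ) ≤ Real.sqrt (2*Real.log (10/9)) := Real.sqrt_nonneg _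
  have hεΔ : ε ≤ 0.096*Δ := by
    have h1 : ε ≤ Real.sqrt (2*Real.log (10/9)) * (0.2*Δ) :=
      le_trans hε_small (mul_le_mul_of_nonneg_left (min_le_right _ _) hc0)
    nlinarith
  have hL : (0:ℝ) < Real.log (9*Δ/(ε*η)) := by
    apply Real.log_pos
    rw [lt_div_iff₀ (by positivity)]
    nlinarith
  have hsqL : (0:ℝ) < Real.sqrt (2*Real.log (9*Δ/(ε*η))) := Real.sqrt_pos.mpr (by linarith)
  have hσpos : 0 < σ := by
    rw [hσ]; exact lt_min (div_pos (by linarith) hsqL) (by linarith)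
  have hσ02 : σ ≤ 0.2*Δ := by rw [hσ]; exact min_le_right _ _
  have hεσ : ε ≤ Real.sqrt (2*Real.log (10/9)) * σ := by rw [hσ]; exact hε_small
  have hεσ' : ε ≤ 0.48*σ := by nlinarith
  have hε2 : ε^2 ≤ 2*Real.log (10/9)*σ^2 := by
    have hss := Real.sq_sqrt (show (0:ℝ) ≤ 2*Real.log (10/9) by linarith)
    nlinarith [mul_le_mul hεσ hεσ hε.le (by positivity : (0:ℝ) ≤ Real.sqrt (2*Real.log (10/9)) * σ)]
  have hexpε : (9/10:ℝ) ≤ Real.exp (-(ε^2)/(2*σ^2)) := by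
    have h1 : -Real.log (10/9) ≤ -(ε^2)/(2*σ^2) := by
      rw [neg_div, neg_le_neg_iff, div_le_iff₀ (by positivity)]
      nlinarith
    calc (9/10:ℝ) = Real.exp (-Real.log (10/9)) := by
          rw [Real.exp_neg, Real.exp_log (by norm_num)]; norm_num
      _ ≤ _ := Real.exp_le_exp.2 h1
  have hσL : σ * Real.sqrt (2*Real.log (9*Δ/(ε*η))) ≤ 0.9*Δ := by
    have h1 : σ ≤ 0.9*Δ/Real.sqrt (2*Real.log (9*Δ/(ε*η))) := hσ ▸ min_le_left _ _
    rwa [le_div_iff₀ hsqL] at h1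
  have hexpΔ : Real.exp (-((0.9*Δ)^2)/(2*σ^2)) ≤ ε*η/(9*Δ) := by
    have hss := Real.sq_sqrt (show (0:ℝ) ≤ 2*Real.log (9*Δ/(ε*η)) by linarith)
    have h1 : 2*Real.log (9*Δ/(ε*η)) * σ^2 ≤ (0.9*Δ)^2 := by
      have e : (σ*Real.sqrt (2*Real.log (9*Δ/(ε*η))))^2 = 2*Real.log (9*Δ/(ε*η))*σ^2 := by
        rw [mul_pow, hss]; ring
      calc 2*Real.log (9*Δ/(ε*η))*σ^2 = (σ*Real.sqrt (2*Real.log (9*Δ/(ε*η))))^2 := e.symm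
        _ ≤ (0.9*Δ)^2 := pow_le_pow_left₀ (by positivity) hσL 2
    have h2 : -((0.9*Δ)^2)/(2*σ^2) ≤ -Real.log (9*Δ/(ε*η)) := by
      rw [neg_div, neg_le_neg_iff, le_div_iff₀ (by positivity)]
      linarith
    calc Real.exp (-((0.9*Δ)^2)/(2*σ^2)) ≤ Real.exp (-Real.log (9*Δ/(ε*η))) := Real.exp_le_exp.2 h2
      _ = ε*η/(9*Δ) := by
          rw [Real.exp_neg, Real.exp_log (by positivity), inv_div]
  -- ## Basic notation
  set i0 : Fin N := ⟨0, hN⟩ with hi0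
  have hπpos : (0:ℝ) < Real.sqrt (2*π) := Real.sqrt_pos.mpr (by positivity)
  set A : ℝ := 1/(Real.sqrt (2*π)*σ^3) with hA
  have hApos : 0 < A := by rw [hA]; positivity
  have hp_le_one : ∀ k : Fin N, p k ≤ 1 := by
    intro k
    rw [← hp_sum]
    exact Finset.single_le_sum (fun j _ => hp_nonneg j) (Finset.mem_univ k)
  -- ## Tail bound
  have htail : ∀ y : ℝ, |y - E i0| ≤ 0.5*σ →
      |(∑ k, p k * gaussDerivFilter σ (y - E k)) - p i0 * gaussDerivFilter σ (y - E i0)| ≤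
        0.1*ε*η * A := by
    intro y hy
    have hsplit : ∑ k, p k * gaussDerivFilter σ (y - E k)
        = p i0 * gaussDerivFilter σ (y - E i0)
          + ∑ k ∈ Finset.univ.erase i0, p k * gaussDerivFilter σ (y - E k) :=
      (Finset.add_sum_erase _ _ (Finset.mem_univ i0)).symm
    rw [hsplit, add_sub_cancel_left]
    refine le_trans (Finset.abs_sum_le_sum_abs _ _) ?_
    have hterm : ∀ k ∈ Finset.univ.erase i0,
        |p k * gaussDerivFilter σ (y - E k)| ≤ p k * (0.1*ε*η*A) := by
      intro k hk
      have hk1 : 1 ≤ k.val := by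
        rcases Finset.mem_erase.1 hk with ⟨hne, -⟩
        exact Nat.one_le_iff_ne_zero.2 (fun h0 => hne (Fin.ext h0))
      have hu : 0.9*Δ ≤ E k - y := by
        have h1 := hE_gap k hk1
        have h2 := abs_le.1 hy
        nlinarith [h2.1, h2.2]
      have habs : |y - E k| = E k - y := by
        rw [abs_sub_comm, abs_of_nonneg (by nlinarith)]
      have hφ : (E k - y) * Real.exp (-((E k - y)^2)/(2*σ^2)) ≤ 0.1*ε*η := by
        calc (E k - y) * Real.exp (-((E k - y)^2)/(2*σ^2))
            ≤ (0.9*Δ) * Real.exp (-((0.9*Δ)^2)/(2*σ^2)) := phi_decr hσpos (by nlinarith) hu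
          _ ≤ (0.9*Δ) * (ε*η/(9*Δ)) := mul_le_mul_of_nonneg_left hexpΔ (by linarith)
          _ = 0.1*ε*η := by field_simp; ring
      rw [abs_mul, abs_of_nonneg (hp_nonneg k), abs_gauss σ _ hσpos, habs, ← hA]
      have := mul_le_mul_of_nonneg_left hφ hApos.le
      calc p k * (A * ((E k - y) * Real.exp (-((E k - y)^2)/(2*σ^2))))
          ≤ p k * (A * (0.1*ε*η)) :=
            mul_le_mul_of_nonneg_left (mul_le_mul_of_nonneg_left hφ hApos.le) (hp_nonneg k)
        _ = p k * (0.1*ε*η*A) := by ring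
    calc ∑ k ∈ Finset.univ.erase i0, |p k * gaussDerivFilter σ (y - E k)|
        ≤ ∑ k ∈ Finset.univ.erase i0, p k * (0.1*ε*η*A) := Finset.sum_le_sum hterm
      _ = (∑ k ∈ Finset.univ.erase i0, p k) * (0.1*ε*η*A) := by rw [Finset.sum_mul]
      _ ≤ 1 * (0.1*ε*η*A) := by
          apply mul_le_mul_of_nonneg_right _ (by positivity)
          rw [← hp_sum]
          exact Finset.sum_le_sum_of_subset_of_nonneg (Finset.erase_subset _ _)
            (fun j _ _ => hp_nonneg j)
      _ = 0.1*ε*η*A := one_mul _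
  -- ## norm bounds relating h and the convolution
  have hB : (0.1*ε*η/(Real.sqrt (2*π)*σ^3)) = 0.1*ε*η*A := by rw [hA]; ring
  have hband : ∀ j : Fin M,
      |(∑ k, p k * gaussDerivFilter σ (x j - E k))| - 0.1*ε*η*A ≤ ‖h j‖ ∧
      ‖h j‖ ≤ |(∑ k, p k * gaussDerivFilter σ (x j - E k))| + 0.1*ε*η*A := by
    intro j
    have t1 := hh j
    rw [show (0.1 * ε * η / (Real.sqrt (2 * π) * σ ^ 3)) = 0.1*ε*η*A by rw [hA]; ring] at t1
    have t2 := abs_norm_sub_norm_le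
      ((↑(∑ k, p k * gaussDerivFilter σ (x j - E k)) : ℂ)) (h j)
    rw [Complex.norm_real, Real.norm_eq_abs] at t2
    rw [abs_le] at t2
    constructor <;> linarith [t2.1, t2.2, t1]
  -- ## grid geometry
  have hM1 : 1 ≤ M := by omega
  have hMpos : (0:ℝ) < M := by exact_mod_cast Nat.pos_of_ne_zero (by omega)
  have hMε : σ/ε + 1 ≤ (M:ℝ) := by
    rw [hM]; push_cast
    have := Nat.le_ceil (σ/ε)
    linarith
  have hδε : 0.5*σ/M < 0.5*ε := by
    rw [div_lt_iff₀ hMpos]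
    have h2 : 0 < σ/ε := by positivity
    have h3 : 0.5*ε*(σ/ε+1) = 0.5*σ + 0.5*ε := by field_simp
    nlinarith
  have hδpos : 0 < 0.5*σ/M := by positivity
  have hEt := abs_le.1 hEtilde
  have hgrid : ∀ j : Fin M, |x j - E i0| ≤ 0.5*σ := by
    intro j
    rw [hx j]
    have hj : (j.val:ℝ) ≤ M := by exact_mod_cast j.isLt.le
    have h1 : (0:ℝ) ≤ 0.5*σ/M * j.val := by positivity
    have h2 : 0.5*σ/M * j.val ≤ 0.5*σ := by
      calc 0.5*σ/M * j.val ≤ 0.5*σ/M * M :=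
            mul_le_mul_of_nonneg_left hj (le_of_lt hδpos)
        _ = 0.5*σ := by field_simp
    rw [abs_le]
    constructor <;> nlinarith [hEt.1, hEt.2]
  -- ## choose a grid point j0 close to E i0
  obtain ⟨j0, hj0⟩ : ∃ j0 : Fin M, |x j0 - E i0| ≤ 0.5*σ/M := by
    set t : ℝ := (E i0 - (Etilde - 0.25*σ))/(0.5*σ/M) with ht
    have ht0 : 0 ≤ t := by
      apply div_nonneg _ hδpos.le
      nlinarith [hEt.1, hEt.2]
    have htM : t ≤ M := by
      rw [ht, div_le_iff₀ hδpos]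
      have : 0.5*σ/M * M = 0.5*σ := by field_simp
      nlinarith [hEt.1, hEt.2]
    set k : ℕ := min ⌊t⌋₊ (M-1) with hk
    refine ⟨⟨k, by omega⟩, ?_⟩
    have hkt : (k:ℝ) ≤ t := by
      calc (k:ℝ) ≤ (⌊t⌋₊:ℝ) := by exact_mod_cast min_le_left _ _
        _ ≤ t := Nat.floor_le ht0
    have htk : t ≤ k + 1 := by
      rcases le_or_gt (⌊t⌋₊) (M-1) with hle | hlt
      · have : k = ⌊t⌋₊ := min_eq_left hle
        rw [this]
        exact (Nat.lt_floor_add_one t).le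
      · have hkM : k = M - 1 := min_eq_right (by omega)
        have : ((M:ℝ) - 1) + 1 = M := by ring
        rw [hkM]
        push_cast [Nat.cast_sub hM1]
        linarith
    rw [hx ⟨k, by omega⟩]
    have hexp : E i0 - (Etilde - 0.25*σ + 0.5*σ/M * k) = (0.5*σ/M) * (t - k) := by
      rw [ht]; field_simp; ring
    rw [abs_sub_comm, abs_le]
    constructor
    · simp only []
      nlinarith [mul_le_mul_of_nonneg_left (sub_nonneg.2 hkt) hδpos.le]
    · nlinarith [mul_le_mul_of_nonneg_left (sub_le_iff_le_add.2 htk) hδpos.le]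
  -- ## abs of the central term
  have habs_g : ∀ j : Fin M,
      |p i0 * gaussDerivFilter σ (x j - E i0)|
        = p i0 * (A * (|x j - E i0| * Real.exp (-(|x j - E i0|^2)/(2*σ^2)))) := by
    intro j
    rw [abs_mul, abs_of_nonneg (hp_nonneg i0), abs_gauss σ _ hσpos, ← hA]
  -- ## upper bound on |h j0|
  have hp0pos : 0 < p i0 := lt_of_lt_of_le hη0 hp0
  have hup : ‖h j0‖ < p i0 * A * (0.5*ε) + 0.2*ε*η*A := by
    have h1 := (hband j0).2
    have h2 := htail (x j0) (hgrid j0)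
    have h3 : |∑ k, p k * gaussDerivFilter σ (x j0 - E k)|
        ≤ |p i0 * gaussDerivFilter σ (x j0 - E i0)| + 0.1*ε*η*A := by
      have h4 := abs_add_le (p i0 * gaussDerivFilter σ (x j0 - E i0))
        ((∑ k, p k * gaussDerivFilter σ (x j0 - E k)) - p i0 * gaussDerivFilter σ (x j0 - E i0))
      rw [add_sub_cancel] at h4
      linarith
    have e1 : Real.exp (-(|x j0 - E i0|^2)/(2*σ^2)) ≤ 1 := by
      rw [Real.exp_le_one_iff]
      apply div_nonpos_of_nonpos_of_nonneg (neg_nonpos.2 (sq_nonneg _)) (by positivity)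
    have e2 : |x j0 - E i0| * Real.exp (-(|x j0 - E i0|^2)/(2*σ^2)) ≤ 0.5*σ/M := by
      calc |x j0 - E i0| * Real.exp (-(|x j0 - E i0|^2)/(2*σ^2))
          ≤ |x j0 - E i0| * 1 := mul_le_mul_of_nonneg_left e1 (abs_nonneg _)
        _ = |x j0 - E i0| := mul_one _
        _ ≤ 0.5*σ/M := hj0
    have h5 : |p i0 * gaussDerivFilter σ (x j0 - E i0)| ≤ p i0 * A * (0.5*σ/M) := by
      rw [habs_g j0]
      calc p i0 * (A * (|x j0 - E i0| * Real.exp (-(|x j0 - E i0|^2)/(2*σ^2))))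
          ≤ p i0 * (A * (0.5*σ/M)) :=
            mul_le_mul_of_nonneg_left (mul_le_mul_of_nonneg_left e2 hApos.le) (hp_nonneg i0)
        _ = p i0 * A * (0.5*σ/M) := (mul_assoc _ _ _).symm
    have h6 : p i0 * A * (0.5*σ/M) < p i0 * A * (0.5*ε) :=
      mul_lt_mul_of_pos_left hδε (mul_pos hp0pos hApos)
    linarith
  -- ## lower bound at jstar, by contradiction
  by_contra hcon
  push_neg at hcon
  have hu1 : |x jstar - E i0| ≤ 0.5*σ := hgrid jstar
  have hφ : 0.9*ε ≤ |x jstar - E i0| * Real.exp (-(|x jstar - E i0|^2)/(2*σ^2)) := by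
    have h1 := phi_incr hσpos hε.le hcon.le (le_trans hu1 (by linarith))
    have h2 : 0.9*ε ≤ ε * Real.exp (-(ε^2)/(2*σ^2)) := by nlinarith
    linarith
  have hlow : p i0 * A * (0.9*ε) - 0.2*ε*η*A ≤ ‖h jstar‖ := by
    have h1 := (hband jstar).1
    have h2 := htail (x jstar) hu1
    have h3 : p i0 * A * (0.9*ε) ≤ |p i0 * gaussDerivFilter σ (x jstar - E i0)| := by
      rw [habs_g jstar]
      calc p i0 * A * (0.9*ε) = p i0 * (A * (0.9*ε)) := mul_assoc _ _ _
        _ ≤ p i0 * (A * (|x jstar - E i0| * Real.exp (-(|x jstar - E i0|^2)/(2*σ^2)))) :=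
            mul_le_mul_of_nonneg_left (mul_le_mul_of_nonneg_left hφ hApos.le) (hp_nonneg i0)
    have h4 := abs_sub_abs_le_abs_sub (p i0 * gaussDerivFilter σ (x jstar - E i0))
      (∑ k, p k * gaussDerivFilter σ (x jstar - E k))
    rw [abs_sub_comm] at h4
    linarith
  have hmin := hjstar j0
  nlinarith [hlow, hup, hmin, mul_nonneg (sub_nonneg.2 hp0) (mul_pos hε hApos).le]
end

section
/- Let c = √(2·ln(10/9)). Let Δ > 0, η ∈ (0, 1], δ ∈ (0, 1), N ≥ 1, weights p_0, …, p_{N−1} ≥ 0 with Σ_j p_j = 1 and p_0 ≥ η, and energies E_0 < E_1 ≤ … ≤ E_{N−1} with E_j − E_0 ≥ Δ for all 1 ≤ j ≤ N−1. Suppose ε > 0 satisfies ε ≤ c·min(0.9·Δ/√(2·ln(9Δ/(ε·η))), 0.2·Δ), and set σ := min(0.9·Δ/√(2·ln(9Δ/(ε·η))), 0.2·Δ) and M := ⌈σ/ε⌉ + 1. Let (Ω, 𝔽, P) be a probability space, Ẽ_0 : Ω → ℝ a random variable with P(|Ẽ_0 − E_0| > σ/4) < δ/2, and h : Ω → (Fin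 M → ℂ) a random variable with P(∀ j ∈ {1, …, M}, |(g_σ∗p)(x_j) − h_j| ≤ 0.1·ε·η/(√(2π)·σ³)) ≥ 1 − δ/2, where x_j := Ẽ_0 − 0.25σ + (0.5σ/M)·(j − 1) for j ∈ {1, …, M}. Let J : Ω → {1, …, M} be any random variable such that |h_{J(ω)}(ω)| ≤ |h_j(ω)| for all j ∈ {1, …, M} and all ω ∈ Ω. Then P(|x_J − E_0| > ε) < δ. -/
open Real MeasureTheory

private lemma aux_decr (σ s t : ℝ) (hσ : 0 < σ) (hs : σ ≤ s) (hst : s ≤ t) :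
    t * Real.exp (-(t ^ 2) / (2 * σ ^ 2)) ≤ s * Real.exp (-(s ^ 2) / (2 * σ ^ 2)) := by
  have hs0 : 0 < s := hσ.trans_le hs
  have ht0 : 0 < t := hs0.trans_le hst
  have h1 : t / s ≤ Real.exp ((t - s) / s) := by
    have h2 : (t - s) / s + 1 = t / s := by field_simp; ring
    linarith [Real.add_one_le_exp ((t - s) / s)]
  have h2 : (t - s) / s ≤ (t ^ 2 - s ^ 2) / (2 * σ ^ 2) := by
    rw [div_le_div_iff₀ hs0 (by positivity)]
    nlinarith [mul_nonneg (sub_nonneg.2 hst) (sub_nonneg.2 hs), sq_nonneg (t - s)]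
  have h3 : t ≤ s * Real.exp ((t ^ 2 - s ^ 2) / (2 * σ ^ 2)) := by
    have := (div_le_iff₀ hs0).mp (h1.trans (Real.exp_le_exp.2 h2))
    linarith
  calc t * Real.exp (-(t ^ 2) / (2 * σ ^ 2))
      ≤ s * Real.exp ((t ^ 2 - s ^ 2) / (2 * σ ^ 2)) * Real.exp (-(t ^ 2) / (2 * σ ^ 2)) :=
        mul_le_mul_of_nonneg_right h3 (Real.exp_pos _).le
    _ = s * Real.exp (-(s ^ 2) / (2 * σ ^ 2)) := by
        rw [mul_assoc, ← Real.exp_add]; ring_nf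

private lemma aux_incr (σ e t : ℝ) (hσ : 0 < σ) (he : 0 < e) (het : e ≤ t)
    (h2 : t * (t + e) ≤ 2 * σ ^ 2) :
    e * Real.exp (-(e ^ 2) / (2 * σ ^ 2)) ≤ t * Real.exp (-(t ^ 2) / (2 * σ ^ 2)) := by
  have ht0 : 0 < t := he.trans_le het
  set u : ℝ := (t ^ 2 - e ^ 2) / (2 * σ ^ 2) with hu
  have hu1 : u ≤ (t - e) / t := by
    rw [hu, div_le_div_iff₀ (by positivity) ht0]
    nlinarith [mul_nonneg (sub_nonneg.2 het) (sub_nonneg.2 het)]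
  have hu2 : e / t ≤ 1 - u := by
    have h : (t - e) / t = 1 - e / t := by field_simp
    linarith [hu1.trans_eq h]
  have h3 : Real.exp u * (1 - u) ≤ 1 := by
    have h4 := mul_le_mul_of_nonneg_left (Real.add_one_le_exp (-u)) (Real.exp_pos u).le
    have h5 : Real.exp u * Real.exp (-u) = 1 := by rw [← Real.exp_add]; simp
    nlinarith
  have h6 : e * Real.exp u ≤ t := by
    have h7 : Real.exp u * (e / t) ≤ 1 :=
      le_trans (mul_le_mul_of_nonneg_left hu2 (Real.exp_pos u).le) h3
    have h8 := mul_le_mul_of_nonneg_right h7 ht0.le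
    calc e * Real.exp u = Real.exp u * (e / t) * t := by field_simp
      _ ≤ 1 * t := h8
      _ = t := one_mul t
  calc e * Real.exp (-(e ^ 2) / (2 * σ ^ 2))
      = e * Real.exp u * Real.exp (-(t ^ 2) / (2 * σ ^ 2)) := by
        rw [mul_assoc, ← Real.exp_add]
        rw [hu, ← add_div]
        ring_nf
    _ ≤ t * Real.exp (-(t ^ 2) / (2 * σ ^ 2)) :=
        mul_le_mul_of_nonneg_right h6 (Real.exp_pos _).le

private lemma sqrtC_pos (σ : ℝ) (hσ : 0 < σ) : 0 < Real.sqrt (2 * π) * σ ^ 3 := by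
  have : 0 < Real.sqrt (2 * π) := Real.sqrt_pos.2 (by positivity)
  positivity

private lemma gdf_abs (σ y : ℝ) (hσ : 0 < σ) :
    |gaussDerivFilter σ y|
      = |y| * Real.exp (-(y ^ 2) / (2 * σ ^ 2)) / (Real.sqrt (2 * π) * σ ^ 3) := by
  have hC : 0 < Real.sqrt (2 * π) * σ ^ 3 := sqrtC_pos σ hσ
  unfold gaussDerivFilter
  rw [abs_mul, abs_mul, abs_neg,
    abs_of_pos (by positivity : (0:ℝ) < 1 / (Real.sqrt (2 * π) * σ ^ 3)),
    abs_of_pos (Real.exp_pos _)]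
  ring

private lemma gdf_le_of (σ s y : ℝ) (hσ : 0 < σ) (hs : σ ≤ s) (hsy : s ≤ |y|) :
    |gaussDerivFilter σ y|
      ≤ s * Real.exp (-(s ^ 2) / (2 * σ ^ 2)) / (Real.sqrt (2 * π) * σ ^ 3) := by
  rw [gdf_abs σ y hσ]
  refine div_le_div_of_nonneg_right ?_ (sqrtC_pos σ hσ).le
  have := aux_decr σ s |y| hσ hs hsy
  rwa [sq_abs] at this

private lemma gdf_abs_le (σ y : ℝ) (hσ : 0 < σ) :
    |gaussDerivFilter σ y| ≤ |y| / (Real.sqrt (2 * π) * σ ^ 3) := by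
  rw [gdf_abs σ y hσ]
  refine div_le_div_of_nonneg_right ?_ (sqrtC_pos σ hσ).le
  have h1 : Real.exp (-(y ^ 2) / (2 * σ ^ 2)) ≤ 1 := by
    rw [Real.exp_le_one_iff]
    apply div_nonpos_of_nonpos_of_nonneg <;> nlinarith [sq_nonneg y]
  nlinarith [abs_nonneg y, Real.exp_pos (-(y ^ 2) / (2 * σ ^ 2))]

private lemma gdf_ge_of (σ e y : ℝ) (hσ : 0 < σ) (he : 0 < e) (hey : e ≤ |y|)
    (h2 : |y| * (|y| + e) ≤ 2 * σ ^ 2) :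
    e * Real.exp (-(e ^ 2) / (2 * σ ^ 2)) / (Real.sqrt (2 * π) * σ ^ 3)
      ≤ |gaussDerivFilter σ y| := by
  rw [gdf_abs σ y hσ]
  refine div_le_div_of_nonneg_right ?_ (sqrtC_pos σ hσ).le
  have := aux_incr σ e |y| hσ he hey h2
  rwa [sq_abs] at this
set_option maxHeartbeats 4000000 in
/-- Probabilistic correctness of the ground state energy estimate: if the coarse estimate
`Ẽ₀` is `σ/4`-close to `E₀` except with probability `δ/2`, and the convolution estimates
`h_j` at the grid points `x_j(ω) = Ẽ₀(ω) − 0.25σ + (0.5σ/M)(j−1)` are all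
`0.1·ε·η/(√(2π)σ³)`-accurate with probability at least `1 − δ/2`, then any minimizer
`J` of `|h_j|` yields a grid point `x_J` that is `ε`-close to `E₀` except with
probability less than `δ`.  (The index `j : Fin M` represents `j − 1` for
`j ∈ {1, …, M}`.) -/
theorem gaussDerivConv_gsee_probabilistic (Δ η δ : ℝ) (hΔ : 0 < Δ)
    (hη0 : 0 < η) (hη1 : η ≤ 1) (hδ0 : 0 < δ) (hδ1 : δ < 1)
    (N : ℕ) (hN : 1 ≤ N) (p E : Fin N → ℝ)
    (hp_nonneg : ∀ j, 0 ≤ p j) (hp_sum : ∑ j, p j = 1) (hp0 : η ≤ p ⟨0, hN⟩)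
    (hE_lt : ∀ j : Fin N, 1 ≤ j.val → E ⟨0, hN⟩ < E j)
    (hE_chain : ∀ i j : Fin N, 1 ≤ i.val → i ≤ j → E i ≤ E j)
    (hE_gap : ∀ j : Fin N, 1 ≤ j.val → Δ ≤ E j - E ⟨0, hN⟩)
    (ε : ℝ) (hε : 0 < ε)
    (hε_small : ε ≤ Real.sqrt (2 * Real.log (10 / 9)) *
      min (0.9 * Δ / Real.sqrt (2 * Real.log (9 * Δ / (ε * η)))) (0.2 * Δ))
    (σ : ℝ)
    (hσ : σ = min (0.9 * Δ / Real.sqrt (2 * Real.log (9 * Δ / (ε * η)))) (0.2 * Δ))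
    (M : ℕ) (hM : M = ⌈σ / ε⌉₊ + 1)
    (Ω : Type*) [MeasurableSpace Ω] (P : Measure Ω) [IsProbabilityMeasure P]
    (Etilde : Ω → ℝ) (hEtilde_meas : Measurable Etilde)
    (h : Ω → Fin M → ℂ) (hh_meas : Measurable h)
    (hEtilde : P {ω | σ / 4 < |Etilde ω - E ⟨0, hN⟩|} < ENNReal.ofReal (δ / 2))
    (hh : 1 - ENNReal.ofReal (δ / 2) ≤
      P {ω | ∀ j : Fin M,
        ‖((↑(∑ k, p k * gaussDerivFilter σ
            (Etilde ω - 0.25 * σ + (0.5 * σ / M) * j.val - E k)) : ℂ) - h ω j)‖ ≤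
          0.1 * ε * η / (Real.sqrt (2 * π) * σ ^ 3)})
    (J : Ω → Fin M) (hJ_meas : Measurable J)
    (hJ : ∀ ω : Ω, ∀ j : Fin M, ‖h ω (J ω)‖ ≤ ‖h ω j‖) :
    P {ω | ε < |Etilde ω - 0.25 * σ + (0.5 * σ / M) * (J ω).val - E ⟨0, hN⟩|} <
      ENNReal.ofReal δ := by
  -- ## basic constants
  have hlog10 : (0:ℝ) ≤ Real.log (10 / 9) := Real.log_nonneg (by norm_num)
  have hc2 : Real.sqrt (2 * Real.log (10 / 9)) ^ 2 = 2 * Real.log (10 / 9) :=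
    Real.sq_sqrt (by positivity)
  have hσ0 : 0 < σ := by
    rcases le_or_gt (min (0.9 * Δ / Real.sqrt (2 * Real.log (9 * Δ / (ε * η)))) (0.2 * Δ)) 0
      with hm | hm
    · exfalso
      have := mul_nonpos_of_nonneg_of_nonpos (Real.sqrt_nonneg (2 * Real.log (10 / 9))) hm
      linarith [hε_small]
    · rw [hσ]; exact hm
  have hεcσ : ε ≤ Real.sqrt (2 * Real.log (10 / 9)) * σ := by rw [hσ]; exact hε_small
  have hcle : Real.sqrt (2 * Real.log (10 / 9)) ≤ 1 / 2 := by
    have h1 : Real.log (10 / 9) ≤ 10 / 9 - 1 := Real.log_le_sub_one_of_pos (by norm_num)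
    calc Real.sqrt (2 * Real.log (10 / 9)) ≤ Real.sqrt ((1 / 2) ^ 2) :=
          Real.sqrt_le_sqrt (by norm_num; linarith)
      _ = 1 / 2 := Real.sqrt_sq (by norm_num)
  have hεσ2 : ε ≤ σ / 2 := by nlinarith [Real.sqrt_nonneg (2 * Real.log (10 / 9))]
  have hσΔ : σ ≤ 0.2 * Δ := by rw [hσ]; exact min_le_right _ _
  have hexpε : (9:ℝ) / 10 ≤ Real.exp (-(ε ^ 2) / (2 * σ ^ 2)) := by
    have h1 : ε ^ 2 ≤ 2 * Real.log (10 / 9) * σ ^ 2 := by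
      nlinarith [Real.sqrt_nonneg (2 * Real.log (10 / 9))]
    have h2 : -Real.log (10 / 9) ≤ -(ε ^ 2) / (2 * σ ^ 2) := by
      rw [le_div_iff₀ (by positivity)]; nlinarith
    calc (9:ℝ) / 10 = Real.exp (-Real.log (10 / 9)) := by
          rw [Real.exp_neg, Real.exp_log (by norm_num)]; norm_num
      _ ≤ _ := Real.exp_le_exp.2 h2
  have hεη9Δ : ε * η < 9 * Δ := by nlinarith
  have hL0 : 0 < Real.log (9 * Δ / (ε * η)) :=
    Real.log_pos (by rw [lt_div_iff₀ (by positivity)]; nlinarith)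
  have hexpΔ : Real.exp (-((0.9 * Δ) ^ 2) / (2 * σ ^ 2)) ≤ ε * η / (9 * Δ) := by
    have hsp : 0 < Real.sqrt (2 * Real.log (9 * Δ / (ε * η))) :=
      Real.sqrt_pos.2 (by positivity)
    have hsq : Real.sqrt (2 * Real.log (9 * Δ / (ε * η))) ^ 2
        = 2 * Real.log (9 * Δ / (ε * η)) := Real.sq_sqrt (by positivity)
    have h1 : σ ≤ 0.9 * Δ / Real.sqrt (2 * Real.log (9 * Δ / (ε * η))) := by
      rw [hσ]; exact min_le_left _ _
    have h2 : σ * Real.sqrt (2 * Real.log (9 * Δ / (ε * η))) ≤ 0.9 * Δ := by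
      rw [← le_div_iff₀ hsp]; exact h1
    have h3 : 2 * Real.log (9 * Δ / (ε * η)) * σ ^ 2 ≤ (0.9 * Δ) ^ 2 := by
      have hprod : (σ * Real.sqrt (2 * Real.log (9 * Δ / (ε * η)))) ^ 2 ≤ (0.9 * Δ) ^ 2 :=
        pow_le_pow_left₀ (mul_nonneg hσ0.le hsp.le) h2 2
      rw [mul_pow, hsq] at hprod
      linarith [hprod]
    have h4 : -((0.9 * Δ) ^ 2) / (2 * σ ^ 2) ≤ -Real.log (9 * Δ / (ε * η)) := by
      rw [div_le_iff₀ (by positivity)]; linarith [h3]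
    calc Real.exp (-((0.9 * Δ) ^ 2) / (2 * σ ^ 2))
        ≤ Real.exp (-Real.log (9 * Δ / (ε * η))) := Real.exp_le_exp.2 h4
      _ = ε * η / (9 * Δ) := by
          rw [Real.exp_neg, Real.exp_log (by positivity), inv_div]
  have hC : 0 < Real.sqrt (2 * π) * σ ^ 3 := sqrtC_pos σ hσ0
  have hp0le1 : p ⟨0, hN⟩ ≤ 1 :=
    hp_sum ▸ Finset.single_le_sum (fun i _ => hp_nonneg i) (Finset.mem_univ _)
  have hp0pos : 0 < p ⟨0, hN⟩ := lt_of_lt_of_le hη0 hp0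
  -- ## grid facts
  have hM1 : 1 ≤ M := by omega
  have hMR : (0:ℝ) < (M:ℝ) := by exact_mod_cast Nat.pos_of_ne_zero (by omega)
  have hstepM : 0.5 * σ / (M:ℝ) * (M:ℝ) = 0.5 * σ := by field_simp
  have hst0 : 0 < 0.5 * σ / (M:ℝ) := by positivity
  have hstep_lt : 0.5 * σ / (M:ℝ) < 0.5 * ε := by
    have hceil : σ / ε ≤ (⌈σ / ε⌉₊ : ℝ) := Nat.le_ceil _
    have hMge : σ / ε + 1 ≤ (M:ℝ) := by rw [hM]; push_cast; linarith
    rw [div_lt_iff₀ hMR]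
    have hde : σ / ε * ε = σ := div_mul_cancel₀ σ hε.ne'
    nlinarith
  -- ## tail bound
  have htail : ∀ x : ℝ, |x - E ⟨0, hN⟩| ≤ σ / 2 →
      |∑ k ∈ Finset.univ.erase ⟨0, hN⟩, p k * gaussDerivFilter σ (x - E k)|
        ≤ (1 - p ⟨0, hN⟩) * (0.1 * ε * η / (Real.sqrt (2 * π) * σ ^ 3)) := by
    intro x hx
    have hsum_erase : ∑ k ∈ Finset.univ.erase ⟨0, hN⟩, p k = 1 - p ⟨0, hN⟩ := by
      have h1 := Finset.sum_erase_add Finset.univ p (Finset.mem_univ (⟨0, hN⟩ : Fin N))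
      rw [hp_sum] at h1; linarith
    calc |∑ k ∈ Finset.univ.erase ⟨0, hN⟩, p k * gaussDerivFilter σ (x - E k)|
        ≤ ∑ k ∈ Finset.univ.erase ⟨0, hN⟩, |p k * gaussDerivFilter σ (x - E k)| :=
          Finset.abs_sum_le_sum_abs _ _
      _ ≤ ∑ k ∈ Finset.univ.erase ⟨0, hN⟩,
            p k * (0.1 * ε * η / (Real.sqrt (2 * π) * σ ^ 3)) := by
          refine Finset.sum_le_sum fun k hk => ?_
          have hk1 : 1 ≤ k.val := by
            rcases Nat.eq_zero_or_pos k.val with h0 | h1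
            · exact absurd (Fin.ext h0 : k = ⟨0, hN⟩) (Finset.ne_of_mem_erase hk)
            · exact h1
          have hgap := hE_gap k hk1
          have hyd : 0.9 * Δ ≤ |x - E k| := by
            have hxe : x ≤ E ⟨0, hN⟩ + σ / 2 := by
              have := (abs_le.1 hx).2; linarith
            have h2 : 0.9 * Δ ≤ E k - x := by linarith
            calc 0.9 * Δ ≤ E k - x := h2
              _ ≤ |E k - x| := le_abs_self _
              _ = |x - E k| := abs_sub_comm _ _
          rw [abs_mul, abs_of_nonneg (hp_nonneg k)]
          refine mul_le_mul_of_nonneg_left ?_ (hp_nonneg k)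
          have hb := gdf_le_of σ (0.9 * Δ) (x - E k) hσ0 (by linarith) hyd
          have hb2 : 0.9 * Δ * Real.exp (-((0.9 * Δ) ^ 2) / (2 * σ ^ 2)) ≤ 0.1 * ε * η := by
            have h5 := mul_le_mul_of_nonneg_left hexpΔ (by linarith : (0:ℝ) ≤ 0.9 * Δ)
            have h6 : 0.9 * Δ * (ε * η / (9 * Δ)) = 0.1 * ε * η := by
              field_simp; ring
            linarith
          exact hb.trans (div_le_div_of_nonneg_right hb2 hC.le)
      _ = (1 - p ⟨0, hN⟩) * (0.1 * ε * η / (Real.sqrt (2 * π) * σ ^ 3)) := by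
          rw [← Finset.sum_mul, hsum_erase]
  -- ## deterministic key lemma
  have key : ∀ ω : Ω, |Etilde ω - E ⟨0, hN⟩| ≤ σ / 4 →
      (∀ j : Fin M, ‖((↑(∑ k, p k * gaussDerivFilter σ
          (Etilde ω - 0.25 * σ + (0.5 * σ / M) * j.val - E k)) : ℂ) - h ω j)‖ ≤
        0.1 * ε * η / (Real.sqrt (2 * π) * σ ^ 3)) →
      |Etilde ω - 0.25 * σ + (0.5 * σ / M) * (J ω).val - E ⟨0, hN⟩| ≤ ε := by
    intro ω hA hB
    by_contra hbad
    push_neg at hbad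
    set st : ℝ := 0.5 * σ / (M:ℝ) with hstdef
    clear_value st
    have hgrid : ∀ j : Fin M,
        |Etilde ω - 0.25 * σ + st * (j.val:ℝ) - E ⟨0, hN⟩| ≤ σ / 2 := by
      intro j
      have hjM : (j.val:ℝ) + 1 ≤ (M:ℝ) := by exact_mod_cast j.isLt
      have h0 : 0 ≤ st * (j.val:ℝ) := mul_nonneg hst0.le (Nat.cast_nonneg _)
      have h1 : st * (j.val:ℝ) ≤ 0.5 * σ := by
        have h2 := mul_le_mul_of_nonneg_left (by linarith : (j.val:ℝ) ≤ (M:ℝ)) hst0.le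
        linarith [hstepM]
      have h2 := abs_le.1 hA
      rw [abs_le]
      constructor
      · linarith [h2.1]
      · linarith [h2.2]
    set u : ℝ := E ⟨0, hN⟩ - (Etilde ω - 0.25 * σ) with hudef
    clear_value u
    have hu0 : 0 ≤ u := by
      have := (abs_le.1 hA).2; rw [hudef]; linarith
    have huσ : u ≤ 0.5 * σ := by
      have := (abs_le.1 hA).1; rw [hudef]; linarith
    have hjlt : min ⌊u / st⌋₊ (M - 1) < M := Nat.lt_of_le_of_lt (min_le_right _ _) (by omega)
    set jstar : Fin M := ⟨min ⌊u / st⌋₊ (M - 1), hjlt⟩ with hjstardef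
    have hnear : |st * (jstar.val:ℝ) - u| ≤ st := by
      rcases le_or_gt ⌊u / st⌋₊ (M - 1) with hfl | hfl
      · have hjv : jstar.val = ⌊u / st⌋₊ := min_eq_left hfl
        have hfl1 : (⌊u / st⌋₊:ℝ) ≤ u / st := Nat.floor_le (div_nonneg hu0 hst0.le)
        have hfl2 : u / st < (⌊u / st⌋₊:ℝ) + 1 := Nat.lt_floor_add_one _
        have e1 : (⌊u / st⌋₊:ℝ) * st ≤ u := by
          have h9 := mul_le_mul_of_nonneg_right hfl1 hst0.le
          rwa [div_mul_cancel₀ u hst0.ne'] at h9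
        have e2 : u < ((⌊u / st⌋₊:ℝ) + 1) * st := by
          have h9 := mul_lt_mul_of_pos_right hfl2 hst0
          rwa [div_mul_cancel₀ u hst0.ne'] at h9
        rw [hjv, abs_le]
        constructor
        · linarith [e1, e2, hst0]
        · linarith [e1, e2, hst0]
      · have hjv : jstar.val = M - 1 := min_eq_right (by omega)
        have hM2 : (M:ℝ) ≤ (⌊u / st⌋₊:ℝ) := by exact_mod_cast (by omega : M ≤ ⌊u / st⌋₊)
        have hfl1 : (⌊u / st⌋₊:ℝ) ≤ u / st := Nat.floor_le (div_nonneg hu0 hst0.le)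
        have e1 : (M:ℝ) * st ≤ u := by
          have h9 := mul_le_mul_of_nonneg_right (hM2.trans hfl1) hst0.le
          rwa [div_mul_cancel₀ u hst0.ne'] at h9
        have hjvR : (jstar.val:ℝ) = (M:ℝ) - 1 := by
          rw [hjv, Nat.cast_sub hM1]; norm_num
        rw [hjvR, abs_le]
        constructor
        · linarith [hstepM, e1, huσ, hst0]
        · linarith [hstepM, e1, huσ, hst0]
    -- the value at the grid point nearest to the ground state energy is small
    have hxs : |Etilde ω - 0.25 * σ + st * (jstar.val:ℝ) - E ⟨0, hN⟩| ≤ st := by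
      have heq : Etilde ω - 0.25 * σ + st * (jstar.val:ℝ) - E ⟨0, hN⟩
          = st * (jstar.val:ℝ) - u := by rw [hudef]; ring
      rw [heq]; exact hnear
    have hsplit : ∀ x : ℝ, (∑ k, p k * gaussDerivFilter σ (x - E k))
        = (∑ k ∈ Finset.univ.erase ⟨0, hN⟩, p k * gaussDerivFilter σ (x - E k))
          + p ⟨0, hN⟩ * gaussDerivFilter σ (x - E ⟨0, hN⟩) := fun x =>
      (Finset.sum_erase_add _ _ (Finset.mem_univ _)).symm
    have hTs := htail _ (hgrid jstar)
    have hgs : |gaussDerivFilter σ (Etilde ω - 0.25 * σ + st * (jstar.val:ℝ) - E ⟨0, hN⟩)|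
        ≤ st / (Real.sqrt (2 * π) * σ ^ 3) :=
      (gdf_abs_le σ _ hσ0).trans (div_le_div_of_nonneg_right hxs hC.le)
    have hFs : |∑ k, p k * gaussDerivFilter σ (Etilde ω - 0.25 * σ + st * (jstar.val:ℝ) - E k)|
        ≤ p ⟨0, hN⟩ * (st / (Real.sqrt (2 * π) * σ ^ 3))
          + (1 - p ⟨0, hN⟩) * (0.1 * ε * η / (Real.sqrt (2 * π) * σ ^ 3)) := by
      rw [hsplit]
      refine (abs_add_le _ _).trans ?_
      have h5 : |p ⟨0, hN⟩ * gaussDerivFilter σ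
          (Etilde ω - 0.25 * σ + st * (jstar.val:ℝ) - E ⟨0, hN⟩)|
          ≤ p ⟨0, hN⟩ * (st / (Real.sqrt (2 * π) * σ ^ 3)) := by
        rw [abs_mul, abs_of_nonneg (hp_nonneg _)]
        exact mul_le_mul_of_nonneg_left hgs (hp_nonneg _)
      linarith [hTs]
    -- the value at the selected grid point is large if it is far from the energy
    have hTJ := htail _ (hgrid (J ω))
    have hgJ : 0.9 * ε / (Real.sqrt (2 * π) * σ ^ 3)
        ≤ |gaussDerivFilter σ (Etilde ω - 0.25 * σ + st * ((J ω).val:ℝ) - E ⟨0, hN⟩)| := by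
      have h6 : |Etilde ω - 0.25 * σ + st * ((J ω).val:ℝ) - E ⟨0, hN⟩|
          * (|Etilde ω - 0.25 * σ + st * ((J ω).val:ℝ) - E ⟨0, hN⟩| + ε) ≤ 2 * σ ^ 2 := by
        have h7 := hgrid (J ω)
        have h8 : 0 ≤ |Etilde ω - 0.25 * σ + st * ((J ω).val:ℝ) - E ⟨0, hN⟩| := abs_nonneg _
        nlinarith [hσ0]
      have h5 := gdf_ge_of σ ε _ hσ0 hε hbad.le h6
      refine le_trans ?_ h5
      refine div_le_div_of_nonneg_right ?_ hC.le
      nlinarith [hexpε, hε]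
    have hFJ : p ⟨0, hN⟩ * (0.9 * ε / (Real.sqrt (2 * π) * σ ^ 3))
        - (1 - p ⟨0, hN⟩) * (0.1 * ε * η / (Real.sqrt (2 * π) * σ ^ 3))
        ≤ |∑ k, p k * gaussDerivFilter σ (Etilde ω - 0.25 * σ + st * ((J ω).val:ℝ) - E k)| := by
      rw [hsplit]
      calc p ⟨0, hN⟩ * (0.9 * ε / (Real.sqrt (2 * π) * σ ^ 3))
          - (1 - p ⟨0, hN⟩) * (0.1 * ε * η / (Real.sqrt (2 * π) * σ ^ 3))
          ≤ p ⟨0, hN⟩ * |gaussDerivFilter σ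
              (Etilde ω - 0.25 * σ + st * ((J ω).val:ℝ) - E ⟨0, hN⟩)|
            - |∑ k ∈ Finset.univ.erase ⟨0, hN⟩,
                p k * gaussDerivFilter σ (Etilde ω - 0.25 * σ + st * ((J ω).val:ℝ) - E k)| := by
            have h9 := mul_le_mul_of_nonneg_left hgJ (hp_nonneg (⟨0, hN⟩ : Fin N))
            linarith [hTJ]
        _ = |p ⟨0, hN⟩ * gaussDerivFilter σ
              (Etilde ω - 0.25 * σ + st * ((J ω).val:ℝ) - E ⟨0, hN⟩)|
            - |-(∑ k ∈ Finset.univ.erase ⟨0, hN⟩,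
                p k * gaussDerivFilter σ (Etilde ω - 0.25 * σ + st * ((J ω).val:ℝ) - E k))| := by
            rw [abs_neg, abs_mul, abs_of_nonneg (hp_nonneg _)]
        _ ≤ |p ⟨0, hN⟩ * gaussDerivFilter σ
              (Etilde ω - 0.25 * σ + st * ((J ω).val:ℝ) - E ⟨0, hN⟩)
            - -(∑ k ∈ Finset.univ.erase ⟨0, hN⟩,
                p k * gaussDerivFilter σ (Etilde ω - 0.25 * σ + st * ((J ω).val:ℝ) - E k))| :=
            abs_sub_abs_le_abs_sub _ _
        _ = |(∑ k ∈ Finset.univ.erase ⟨0, hN⟩,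
                p k * gaussDerivFilter σ (Etilde ω - 0.25 * σ + st * ((J ω).val:ℝ) - E k))
            + p ⟨0, hN⟩ * gaussDerivFilter σ
              (Etilde ω - 0.25 * σ + st * ((J ω).val:ℝ) - E ⟨0, hN⟩)| := by
            rw [sub_neg_eq_add, add_comm]
    -- compare through the estimates h
    have hcmp : ∀ j : Fin M,
        |(|∑ k, p k * gaussDerivFilter σ (Etilde ω - 0.25 * σ + st * (j.val:ℝ) - E k)|
          - ‖h ω j‖)| ≤ 0.1 * ε * η / (Real.sqrt (2 * π) * σ ^ 3) := by
      intro j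
      have h1 := (abs_norm_sub_norm_le
        ((↑(∑ k, p k * gaussDerivFilter σ (Etilde ω - 0.25 * σ + st * (j.val:ℝ) - E k)) : ℂ))
        (h ω j)).trans (hB j)
      rwa [Complex.norm_real, Real.norm_eq_abs] at h1
    have hcs := abs_le.1 (hcmp jstar)
    have hcJ := abs_le.1 (hcmp (J ω))
    have hhle := hJ ω jstar
    have hfinal : p ⟨0, hN⟩ * (0.9 * ε / (Real.sqrt (2 * π) * σ ^ 3))
        - (1 - p ⟨0, hN⟩) * (0.1 * ε * η / (Real.sqrt (2 * π) * σ ^ 3))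
        ≤ p ⟨0, hN⟩ * (st / (Real.sqrt (2 * π) * σ ^ 3))
          + (1 - p ⟨0, hN⟩) * (0.1 * ε * η / (Real.sqrt (2 * π) * σ ^ 3))
          + 2 * (0.1 * ε * η / (Real.sqrt (2 * π) * σ ^ 3)) := by
      linarith [hFJ, hFs, hcs.1, hcs.2, hcJ.1, hcJ.2, hhle]
    have h13 : 0.9 * ε * p ⟨0, hN⟩ - (1 - p ⟨0, hN⟩) * (0.1 * ε * η)
        ≤ p ⟨0, hN⟩ * st + (1 - p ⟨0, hN⟩) * (0.1 * ε * η) + 0.2 * ε * η := by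
      have h14 : (0.9 * ε * p ⟨0, hN⟩ - (1 - p ⟨0, hN⟩) * (0.1 * ε * η))
            / (Real.sqrt (2 * π) * σ ^ 3)
          ≤ (p ⟨0, hN⟩ * st + (1 - p ⟨0, hN⟩) * (0.1 * ε * η) + 0.2 * ε * η)
            / (Real.sqrt (2 * π) * σ ^ 3) := by
        have e1 : (0.9 * ε * p ⟨0, hN⟩ - (1 - p ⟨0, hN⟩) * (0.1 * ε * η))
              / (Real.sqrt (2 * π) * σ ^ 3)
            = p ⟨0, hN⟩ * (0.9 * ε / (Real.sqrt (2 * π) * σ ^ 3))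
              - (1 - p ⟨0, hN⟩) * (0.1 * ε * η / (Real.sqrt (2 * π) * σ ^ 3)) := by ring
        have e2 : (p ⟨0, hN⟩ * st + (1 - p ⟨0, hN⟩) * (0.1 * ε * η) + 0.2 * ε * η)
              / (Real.sqrt (2 * π) * σ ^ 3)
            = p ⟨0, hN⟩ * (st / (Real.sqrt (2 * π) * σ ^ 3))
              + (1 - p ⟨0, hN⟩) * (0.1 * ε * η / (Real.sqrt (2 * π) * σ ^ 3))
              + 2 * (0.1 * ε * η / (Real.sqrt (2 * π) * σ ^ 3)) := by ring
        rw [e1, e2]; exact hfinal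
      exact (div_le_div_iff_of_pos_right hC).mp h14
    have hq1 : p ⟨0, hN⟩ * st < p ⟨0, hN⟩ * (0.5 * ε) :=
      mul_lt_mul_of_pos_left hstep_lt hp0pos
    have hq2 : 0 ≤ (p ⟨0, hN⟩ - η) * (ε * (2 - p ⟨0, hN⟩)) :=
      mul_nonneg (sub_nonneg.2 hp0)
        (mul_nonneg hε.le (by linarith : (0:ℝ) ≤ 2 - p ⟨0, hN⟩))
    have hq3 : 0 < ε * p ⟨0, hN⟩ * p ⟨0, hN⟩ := mul_pos (mul_pos hε hp0pos) hp0pos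
    clear hcmp hcs hcJ hhle hFs hFJ hTs hTJ hgs hgJ hfinal hsplit hgrid hbad hB hh hEtilde hnear hxs hA hJ hp_sum hp_nonneg hE_lt hE_chain hE_gap htail
    linarith only [h13, hq1, hq2, hq3]
  -- ## measure-theoretic conclusion
  set Acc : Set Ω := {ω | ∀ j : Fin M,
      ‖((↑(∑ k, p k * gaussDerivFilter σ
          (Etilde ω - 0.25 * σ + (0.5 * σ / M) * j.val - E k)) : ℂ) - h ω j)‖ ≤
        0.1 * ε * η / (Real.sqrt (2 * π) * σ ^ 3)} with hAccdef
  have hAccMeas : MeasurableSet Acc := by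
    rw [hAccdef, Set.setOf_forall]
    refine MeasurableSet.iInter fun j => ?_
    have hcont : Continuous (gaussDerivFilter σ) := by
      unfold gaussDerivFilter
      exact (continuous_const.mul continuous_id).mul
        (Real.continuous_exp.comp ((continuous_pow 2).neg.div_const _))
    have hmF : Measurable fun ω => (↑(∑ k, p k * gaussDerivFilter σ
        (Etilde ω - 0.25 * σ + (0.5 * σ / M) * j.val - E k)) : ℂ) := by
      refine Complex.measurable_ofReal.comp ?_
      refine Finset.measurable_sum _ fun k _ => ?_
      refine (measurable_const.mul ?_)
      exact hcont.measurable.comp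
        (((hEtilde_meas.sub measurable_const).add measurable_const).sub measurable_const)
    have hmh : Measurable fun ω => h ω j := (measurable_pi_apply j).comp hh_meas
    exact measurableSet_le
      (continuous_norm.measurable.comp (hmF.sub hmh)) measurable_const
  have hPacc : P Accᶜ ≤ ENNReal.ofReal (δ / 2) := by
    rw [prob_compl_eq_one_sub hAccMeas]
    refine tsub_le_iff_right.2 ?_
    calc (1:ENNReal) = ENNReal.ofReal (δ / 2) + (1 - ENNReal.ofReal (δ / 2)) := by
          rw [add_tsub_cancel_of_le (ENNReal.ofReal_le_one.2 (by linarith))]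
      _ ≤ ENNReal.ofReal (δ / 2) + P Acc := add_le_add le_rfl hh
  have hsub : {ω | ε < |Etilde ω - 0.25 * σ + (0.5 * σ / M) * (J ω).val - E ⟨0, hN⟩|}
      ⊆ {ω | σ / 4 < |Etilde ω - E ⟨0, hN⟩|} ∪ Accᶜ := by
    intro ω hω
    by_contra hc
    rw [Set.mem_union] at hc
    push_neg at hc
    obtain ⟨h1, h2⟩ := hc
    simp only [Set.mem_setOf_eq, not_lt] at h1
    have h2' : ω ∈ Acc := Set.not_notMem.1 h2
    exact absurd hω (not_lt.2 (key ω h1 h2'))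
  calc P {ω | ε < |Etilde ω - 0.25 * σ + (0.5 * σ / M) * (J ω).val - E ⟨0, hN⟩|}
      ≤ P ({ω | σ / 4 < |Etilde ω - E ⟨0, hN⟩|} ∪ Accᶜ) := measure_mono hsub
    _ ≤ P {ω | σ / 4 < |Etilde ω - E ⟨0, hN⟩|} + P Accᶜ := measure_union_le _ _
    _ < ENNReal.ofReal (δ / 2) + ENNReal.ofReal (δ / 2) :=
        ENNReal.add_lt_add_of_lt_of_le (measure_ne_top P _) hEtilde hPacc
    _ = ENNReal.ofReal δ := by
        rw [← ENNReal.ofReal_add (by linarith) (by linarith)]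
        norm_num
end
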